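/- Let ρ : [0,∞) → [Φ,∞) be continuous with Φ > 0 and γ₂ ∈ (0,1), and suppose ρ(x) → Φ as x → ∞. Then f(x) = (γ₂/(1−γ₂)) ∫ₓ^∞ exp(−(1/(1−γ₂)) ∫ₓ^y ρ(u) du) dy satisfies lim_{x→∞} f(x) = γ₂/Φ. -/

import Mathlib

set_option maxHeartbeats 1000000

open Set MeasureTheory Filter Real

lemma aux_exp_integrable (a x : ℝ) (ha : 0 < a) :
    IntegrableOn (fun y => Real.exp (-(a * (y - x)))) (Ioi x) := by
  have he : (fun y => Real.exp (-(a * (y - x)))) =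
      fun y => Real.exp (a * x) * Real.exp (-a * y) := by
    ext y; rw [← Real.exp_add]; ring_nf
  rw [he]
  exact (exp_neg_integrableOn_Ioi x ha).const_mul _

lemma aux_exp_int (a x : ℝ) (ha : 0 < a) :
    ∫ y in Ioi x, Real.exp (-(a * (y - x))) = 1 / a := by
  have hderiv : ∀ y ∈ Ici x, HasDerivAt (fun y => -(1/a) * Real.exp (-(a * (y - x))))
      (Real.exp (-(a * (y - x)))) y := by
    intro y _
    have h1 : HasDerivAt (fun y : ℝ => -(a * (y - x))) (-a) y := by
      exact (((hasDerivAt_id y).sub_const x).const_mul a).neg.congr_deriv (by ring)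
    have h2 := (h1.exp).const_mul (-(1/a))
    exact h2.congr_deriv (by linear_combination (Real.exp (-(a * (y - x)))) * mul_inv_cancel₀ ha.ne')
  have hlim : Tendsto (fun y => -(1/a) * Real.exp (-(a * (y - x)))) atTop (nhds 0) := by
    have h3 : Tendsto (fun y : ℝ => -(a * (y - x))) atTop atBot := by
      apply tendsto_neg_atBot_iff.mpr
      exact (tendsto_atTop_add_const_right _ (-x) tendsto_id).const_mul_atTop ha
    have := (Real.tendsto_exp_atBot.comp h3).const_mul (-(1/a))
    simpa using this
  have := integral_Ioi_of_hasDerivAt_of_tendsto' hderiv (aux_exp_integrable a x ha) hlim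
  rw [this]; simp

lemma aux_sandwich (Φ δ γ₂ : ℝ) (hΦ : 0 < Φ) (hδ : 0 < δ) (hγ : γ₂ ∈ Set.Ioo (0:ℝ) 1)
    (ρ : ℝ → ℝ) (hρc : Continuous ρ) (x : ℝ)
    (h1 : ∀ u, x ≤ u → Φ ≤ ρ u) (h2 : ∀ u, x ≤ u → ρ u ≤ Φ + δ) :
    γ₂ / (Φ + δ) ≤ (γ₂ / (1 - γ₂)) *
      ∫ y in Set.Ici x, Real.exp (-(1 / (1 - γ₂)) * ∫ u in x..y, ρ u) ∧
    (γ₂ / (1 - γ₂)) *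
      ∫ y in Set.Ici x, Real.exp (-(1 / (1 - γ₂)) * ∫ u in x..y, ρ u) ≤ γ₂ / Φ := by
  obtain ⟨hγ0, hγ1⟩ := hγ
  have h1γ : 0 < 1 - γ₂ := by linarith
  set c : ℝ := 1 / (1 - γ₂) with hc
  have hcpos : 0 < c := by positivity
  set g : ℝ → ℝ := fun y => Real.exp (-c * ∫ u in x..y, ρ u) with hg
  have hIcont : Continuous fun y => ∫ u in x..y, ρ u :=
    intervalIntegral.continuous_primitive (fun a b => hρc.intervalIntegrable a b) x
  have hgcont : Continuous g := Real.continuous_exp.comp (continuous_const.mul hIcont)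
  -- pointwise bounds on Ioi x
  have hub : ∀ y ∈ Ioi x, g y ≤ Real.exp (-(c * Φ * (y - x))) := by
    intro y hy
    have hxy : x ≤ y := le_of_lt hy
    have hI : Φ * (y - x) ≤ ∫ u in x..y, ρ u := by
      have := intervalIntegral.integral_mono_on (μ := volume) hxy
        intervalIntegrable_const (hρc.intervalIntegrable x y)
        (fun u hu => h1 u hu.1)
      simpa [intervalIntegral.integral_const, smul_eq_mul, mul_comm] using this
    apply Real.exp_le_exp.mpr
    nlinarith [hcpos.le]
  have hlb : ∀ y ∈ Ioi x, Real.exp (-(c * (Φ + δ) * (y - x))) ≤ g y := by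
    intro y hy
    have hxy : x ≤ y := le_of_lt hy
    have hI : (∫ u in x..y, ρ u) ≤ (Φ + δ) * (y - x) := by
      have := intervalIntegral.integral_mono_on (μ := volume) hxy
        (hρc.intervalIntegrable x y) intervalIntegrable_const
        (fun u hu => h2 u hu.1)
      rw [intervalIntegral.integral_const, smul_eq_mul] at this
      linarith [this]
    apply Real.exp_le_exp.mpr
    nlinarith [hcpos.le]
  have hcΦ : 0 < c * Φ := by positivity
  have hcΦδ : 0 < c * (Φ + δ) := by positivity
  have hub_int := aux_exp_integrable (c * Φ) x hcΦ
  have hlb_int := aux_exp_integrable (c * (Φ + δ)) x hcΦδ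
  have hg_int : IntegrableOn g (Ioi x) := by
    refine MeasureTheory.Integrable.mono hub_int hgcont.aestronglyMeasurable.restrict ?_
    filter_upwards [self_mem_ae_restrict measurableSet_Ioi] with y hy
    rw [Real.norm_eq_abs, Real.norm_eq_abs, abs_of_pos (Real.exp_pos _),
      abs_of_pos (Real.exp_pos _)]
    exact hub y hy
  have hIci : (∫ y in Set.Ici x, Real.exp (-(1 / (1 - γ₂)) * ∫ u in x..y, ρ u))
      = ∫ y in Ioi x, g y := by
    rw [integral_Ici_eq_integral_Ioi]
  have hintub : (∫ y in Ioi x, g y) ≤ 1 / (c * Φ) := by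
    rw [← aux_exp_int (c * Φ) x hcΦ]
    exact setIntegral_mono_on hg_int hub_int measurableSet_Ioi hub
  have hintlb : 1 / (c * (Φ + δ)) ≤ ∫ y in Ioi x, g y := by
    rw [← aux_exp_int (c * (Φ + δ)) x hcΦδ]
    exact setIntegral_mono_on hlb_int hg_int measurableSet_Ioi hlb
  have hcoef : γ₂ / (1 - γ₂) = γ₂ * c := by rw [hc]; ring
  have hΦδ : 0 < Φ + δ := by linarith
  constructor
  · rw [hIci, hcoef]
    have : γ₂ / (Φ + δ) = γ₂ * c * (1 / (c * (Φ + δ))) := by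
      field_simp
    rw [this]
    exact mul_le_mul_of_nonneg_left hintlb (by positivity)
  · rw [hIci, hcoef]
    have : γ₂ / Φ = γ₂ * c * (1 / (c * Φ)) := by field_simp
    rw [this]
    exact mul_le_mul_of_nonneg_left hintub (by positivity)

theorem stmt19 (Φ γ₂ : ℝ) (hΦ : 0 < Φ) (hγ : γ₂ ∈ Set.Ioo (0:ℝ) 1)
    (ρ : ℝ → ℝ) (hρc : Continuous ρ) (hρ : ∀ u, 0 ≤ u → Φ ≤ ρ u)
    (hρlim : Filter.Tendsto ρ Filter.atTop (nhds Φ))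
    (f : ℝ → ℝ)
    (hf : ∀ x, f x = (γ₂ / (1 - γ₂)) *
      ∫ y in Set.Ici x, Real.exp (-(1 / (1 - γ₂)) * ∫ u in x..y, ρ u)) :
    Filter.Tendsto f Filter.atTop (nhds (γ₂ / Φ)) := by
  rw [Metric.tendsto_atTop]
  intro ε hε
  set δ : ℝ := ε * Φ ^ 2 / γ₂ with hδdef
  have hγ0 := hγ.1
  have hδ : 0 < δ := by positivity
  have hev : ∀ᶠ u in atTop, ρ u < Φ + δ :=
    hρlim.eventually_lt_const (by linarith)
  obtain ⟨M₀, hM₀⟩ := eventually_atTop.mp hev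
  refine ⟨max M₀ 0, fun x hx => ?_⟩
  have hx0 : (0:ℝ) ≤ x := le_trans (le_max_right _ _) hx
  have hxM : M₀ ≤ x := le_trans (le_max_left _ _) hx
  obtain ⟨hL, hU⟩ := aux_sandwich Φ δ γ₂ hΦ hδ hγ ρ hρc x
    (fun u hu => hρ u (le_trans hx0 hu))
    (fun u hu => (hM₀ u (le_trans hxM hu)).le)
  rw [← hf x] at hL hU
  rw [Real.dist_eq, abs_lt]
  have hΦδ : 0 < Φ + δ := by linarith
  have hkey : γ₂ / Φ - γ₂ / (Φ + δ) < ε := by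
    rw [div_sub_div _ _ hΦ.ne' hΦδ.ne', div_lt_iff₀ (by positivity)]
    have hδγ : γ₂ * δ = ε * Φ ^ 2 := by rw [hδdef]; field_simp
    nlinarith [hδγ, mul_pos (mul_pos hε hΦ) hδ]
  constructor
  · linarith
  · have : 0 < γ₂ / (Φ + δ) := by positivity
    linarith
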